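/- For all u ∈ [0,1], φ(u) ≤ u, with equality if and only if u ∈ {0,1}, where φ(u) = H((1 - √(1-u²))/2). -/

import Mathlib

open Real

noncomputable def binEnt (q : ℝ) : ℝ := -(q * Real.logb 2 q) - (1 - q) * Real.logb 2 (1 - q)

noncomputable def Bh (q : ℝ) : ℝ := 2 * Real.sqrt (q * (1 - q))

noncomputable def phi (u : ℝ) : ℝ := binEnt ((1 - Real.sqrt (1 - u ^ 2)) / 2)


lemma two_log_gt {t : ℝ} (ht0 : 0 < t) (ht1 : t < 1) :
    t - t⁻¹ < 2 * Real.log t := by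
  have key : StrictAntiOn (fun x : ℝ => 2 * Real.log x - x + x⁻¹) (Set.Icc t 1) := by
    apply strictAntiOn_of_deriv_neg (convex_Icc t 1)
    · intro x hx
      have hx0 : x ≠ 0 := (lt_of_lt_of_le ht0 hx.1).ne'
      have hc : ContinuousAt (fun x : ℝ => 2 * Real.log x - x + x⁻¹) x :=
        (((Real.continuousAt_log hx0).const_mul 2).sub continuousAt_id).add
          (continuousAt_inv₀ hx0)
      exact hc.continuousWithinAt
    · intro x hx
      rw [interior_Icc] at hx
      have hx0 : 0 < x := lt_trans ht0 hx.1
      have hd : HasDerivAt (fun x : ℝ => 2 * Real.log x - x + x⁻¹)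
          (2 * x⁻¹ - 1 + -(x^2)⁻¹) x := by
        have h1 := (Real.hasDerivAt_log hx0.ne').const_mul 2
        have h2 := (h1.sub (hasDerivAt_id x)).add (hasDerivAt_inv hx0.ne')
        exact h2
      rw [hd.deriv]
      have hx1 : x < 1 := hx.2
      rw [show (2 * x⁻¹ - 1 + -(x^2)⁻¹ : ℝ) = -((x-1)^2 / x^2) by
        field_simp; ring]
      have hne : x - 1 ≠ 0 := by linarith
      have h3 : (0:ℝ) < (x-1)^2 := by positivity
      exact neg_lt_zero.mpr (div_pos h3 (by positivity))
  have h := key (Set.left_mem_Icc.2 ht1.le) (Set.right_mem_Icc.2 ht1.le) ht1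
  simp [Real.log_one] at h
  linarith

lemma log_ratio_gt {s : ℝ} (hs0 : 0 < s) (hs1 : s < 1) :
    2 * s < Real.log (1+s) - Real.log (1-s) := by
  have key : StrictMonoOn (fun x : ℝ => Real.log (1+x) - Real.log (1-x) - 2*x)
      (Set.Icc 0 s) := by
    apply strictMonoOn_of_deriv_pos (convex_Icc 0 s)
    · intro x hx
      have h1 : (0:ℝ) < 1 + x := by linarith [hx.1]
      have h2 : (0:ℝ) < 1 - x := by linarith [hx.2]
      have hc : ContinuousAt (fun x : ℝ => Real.log (1+x) - Real.log (1-x) - 2*x) x := by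
        have c1 : ContinuousAt (fun x : ℝ => Real.log (1+x)) x :=
          (Real.continuousAt_log h1.ne').comp (continuousAt_const.add continuousAt_id)
        have c2 : ContinuousAt (fun x : ℝ => Real.log (1-x)) x :=
          (Real.continuousAt_log h2.ne').comp (continuousAt_const.sub continuousAt_id)
        exact (c1.sub c2).sub (continuousAt_const.mul continuousAt_id)
      exact hc.continuousWithinAt
    · intro x hx
      rw [interior_Icc] at hx
      have h1 : (0:ℝ) < 1 + x := by linarith [hx.1]
      have h2 : (0:ℝ) < 1 - x := by linarith [hx.2, hs1]
      have d1 : HasDerivAt (fun x : ℝ => Real.log (1+x)) (1/(1+x)) x := by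
        have := ((hasDerivAt_id x).const_add 1).log h1.ne'
        simpa using this
      have d2 : HasDerivAt (fun x : ℝ => Real.log (1-x)) (-1/(1-x)) x := by
        have := ((hasDerivAt_id x).const_sub 1).log h2.ne'
        simpa using this
      have hd : HasDerivAt (fun x : ℝ => Real.log (1+x) - Real.log (1-x) - 2*x)
          (1/(1+x) - -1/(1-x) - 2) x := by
        have h := (d1.sub d2).sub ((hasDerivAt_id x).const_mul 2)
        rw [mul_one] at h
        exact h
      rw [hd.deriv]
      rw [show (1/(1+x) - -1/(1-x) - 2 : ℝ) = 2*x^2 / ((1+x)*(1-x)) by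
        field_simp; ring]
      have hx0 : 0 < x := hx.1
      positivity
  have h := key (Set.left_mem_Icc.2 hs0.le) (Set.right_mem_Icc.2 hs0.le) hs0
  simp at h
  linarith

lemma D_gt_sq {s : ℝ} (hs0 : 0 < s) (hs1 : s < 1) :
    s^2 < (1+s) * Real.log (1+s) + (1-s) * Real.log (1-s) := by
  have key : StrictMonoOn
      (fun x : ℝ => (1+x) * Real.log (1+x) + (1-x) * Real.log (1-x) - x^2)
      (Set.Icc 0 s) := by
    apply strictMonoOn_of_deriv_pos (convex_Icc 0 s)
    · intro x hx
      have h1 : (0:ℝ) < 1 + x := by linarith [hx.1]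
      have h2 : (0:ℝ) < 1 - x := by linarith [hx.2, hs1]
      have c1 : ContinuousAt (fun x : ℝ => Real.log (1+x)) x :=
        (Real.continuousAt_log h1.ne').comp (continuousAt_const.add continuousAt_id)
      have c2 : ContinuousAt (fun x : ℝ => Real.log (1-x)) x :=
        (Real.continuousAt_log h2.ne').comp (continuousAt_const.sub continuousAt_id)
      have hc : ContinuousAt
          (fun x : ℝ => (1+x) * Real.log (1+x) + (1-x) * Real.log (1-x) - x^2) x := by
        exact (((continuousAt_const.add continuousAt_id).mul c1).add
          ((continuousAt_const.sub continuousAt_id).mul c2)).sub (continuousAt_id.pow 2)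
      exact hc.continuousWithinAt
    · intro x hx
      rw [interior_Icc] at hx
      have h1 : (0:ℝ) < 1 + x := by linarith [hx.1]
      have h2 : (0:ℝ) < 1 - x := by linarith [hx.2, hs1]
      have d1 : HasDerivAt (fun x : ℝ => Real.log (1+x)) (1/(1+x)) x := by
        simpa using ((hasDerivAt_id x).const_add 1).log h1.ne'
      have d2 : HasDerivAt (fun x : ℝ => Real.log (1-x)) (-1/(1-x)) x := by
        simpa using ((hasDerivAt_id x).const_sub 1).log h2.ne'
      have p1 : HasDerivAt (fun x : ℝ => (1+x) * Real.log (1+x))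
          (1 * Real.log (1+x) + (1+x) * (1/(1+x))) x :=
        ((hasDerivAt_id x).const_add 1).mul d1
      have p2 : HasDerivAt (fun x : ℝ => (1-x) * Real.log (1-x))
          ((-1) * Real.log (1-x) + (1-x) * (-1/(1-x))) x := by
        have := ((hasDerivAt_id x).const_sub 1).mul d2
        exact this
      have hd : HasDerivAt
          (fun x : ℝ => (1+x) * Real.log (1+x) + (1-x) * Real.log (1-x) - x^2)
          (Real.log (1+x) - Real.log (1-x) - 2*x) x := by
        have hp : HasDerivAt (fun x : ℝ => x^2) (2*x) x := by simpa using hasDerivAt_pow 2 x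
        have h := (p1.add p2).sub hp
        have e1 : (1+x)*(1/(1+x)) = 1 := by field_simp
        have e2 : (1-x)*(-1/(1-x)) = -1 := by field_simp
        exact h.congr_deriv (by rw [e1, e2]; ring)
      rw [hd.deriv]
      have := log_ratio_gt hx.1 (lt_trans hx.2 hs1)
      linarith
  have h := key (Set.left_mem_Icc.2 hs0.le) (Set.right_mem_Icc.2 hs0.le) hs0
  simp [Real.log_one] at h
  linarith

set_option maxHeartbeats 1000000 in
lemma phi_lt {u : ℝ} (h0 : 0 < u) (h1 : u < 1) : phi u < u := by
  have hl2 : 0 < Real.log 2 := Real.log_pos (by norm_num)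
  have hu2 : 0 < 1 - u^2 := by nlinarith
  set s : ℝ := Real.sqrt (1 - u^2) with hs_def
  have hs_sq : s^2 = 1 - u^2 := Real.sq_sqrt hu2.le
  have hs0 : 0 < s := Real.sqrt_pos.2 hu2
  have hs1 : s < 1 := by nlinarith
  set q : ℝ := (1 - s)/2 with hq_def
  have hq0 : 0 < q := by rw [hq_def]; linarith
  have hqh : q < 1/2 := by rw [hq_def]; linarith
  have h1q : 1 - q = (1+s)/2 := by rw [hq_def]; ring
  have hphi : phi u = binEnt q := rfl
  have key : -(q * Real.log q) - (1-q) * Real.log (1-q) < u * Real.log 2 := by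
    rcases le_or_gt u (9/10) with hu9 | hu9
    · -- case A
      set a : ℝ := Real.sqrt q with ha_def
      set b : ℝ := Real.sqrt (1-q) with hb_def
      have ha_sq : a^2 = q := Real.sq_sqrt hq0.le
      have hb_sq : b^2 = 1 - q := Real.sq_sqrt (by linarith)
      have ha0 : 0 < a := Real.sqrt_pos.2 hq0
      have hb0 : 0 < b := Real.sqrt_pos.2 (by linarith)
      have ha1 : a < 1 := by nlinarith
      have hb1 : b < 1 := by nlinarith
      have hab : a * b = u / 2 := by
        rw [ha_def, hb_def, ← Real.sqrt_mul hq0.le]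
        have : q * (1 - q) = (u/2)^2 := by rw [hq_def, h1q]; nlinarith [hs_sq]
        rw [this, Real.sqrt_sq (by linarith)]
      have hlq : q * Real.log q = a^2 * (2 * Real.log a) := by
        have : Real.log (a^2) = 2 * Real.log a := by rw [Real.log_pow]; norm_num
        rw [← ha_sq, this]
      have hl1q : (1-q) * Real.log (1-q) = b^2 * (2 * Real.log b) := by
        have : Real.log (b^2) = 2 * Real.log b := by rw [Real.log_pow]; norm_num
        rw [← hb_sq, this]
      have h1 : -(q * Real.log q) < a * b^2 := by
        have hm := mul_lt_mul_of_pos_left (two_log_gt ha0 ha1) (by positivity : (0:ℝ) < a^2)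
        have e : a^2 * (a - a⁻¹) = a^3 - a := by field_simp
        rw [e] at hm
        have e2 : a * b^2 = a - a^3 := by
          have : b^2 = 1 - a^2 := by rw [hb_sq, ha_sq]
          rw [this]; ring
        linarith [hlq]
      have h2 : -((1-q) * Real.log (1-q)) < b * a^2 := by
        have hm := mul_lt_mul_of_pos_left (two_log_gt hb0 hb1) (by positivity : (0:ℝ) < b^2)
        have e : b^2 * (b - b⁻¹) = b^3 - b := by field_simp
        rw [e] at hm
        have e2 : b * a^2 = b - b^3 := by
          have : a^2 = 1 - b^2 := by rw [hb_sq, ha_sq] at *; linarith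
          rw [this]; ring
        linarith [hl1q]
      have hsum : a * b^2 + b * a^2 = (u/2) * (a + b) := by
        rw [← hab]; ring
      have habsq : (a + b)^2 = 1 + u := by linear_combination ha_sq + hb_sq + 2*hab
      have hab2 : a + b < 2 * Real.log 2 := by
        by_contra hcon
        push_neg at hcon
        have h4 : (2*Real.log 2)*(2*Real.log 2) ≤ (a+b)*(a+b) :=
          mul_self_le_mul_self (by positivity) hcon
        nlinarith [Real.log_two_gt_d9, habsq]
      have hfin : (u/2) * (a+b) < u * Real.log 2 := by
        have := mul_lt_mul_of_pos_left hab2 (by linarith : (0:ℝ) < u/2)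
        nlinarith [this]
      linarith
    · -- case B
      have hD := D_gt_sq hs0 hs1
      have e1 : Real.log q = Real.log (1-s) - Real.log 2 := by
        rw [hq_def, Real.log_div (by linarith) (by norm_num)]
      have e2 : Real.log (1-q) = Real.log (1+s) - Real.log 2 := by
        rw [h1q, Real.log_div (by linarith) (by norm_num)]
      have keyeq : -(q * Real.log q) - (1-q) * Real.log (1-q)
          = Real.log 2 - ((1+s) * Real.log (1+s) + (1-s) * Real.log (1-s)) / 2 := by
        rw [e1, e2, h1q, hq_def]; ring
      rw [keyeq]
      have hD' : 1 - u^2 < (1+s) * Real.log (1+s) + (1-s) * Real.log (1-s) := by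
        rw [← hs_sq]; exact hD
      have hcub : Real.log 2 ≤ (1+u)/2 := by linarith [Real.log_two_lt_d9]
      have hmul := mul_le_mul_of_nonneg_left hcub (by linarith : (0:ℝ) ≤ 1-u)
      nlinarith [hmul, hD']
  rw [hphi, binEnt, Real.logb, Real.logb]
  rw [show -(q * (Real.log q / Real.log 2)) - (1 - q) * (Real.log (1-q) / Real.log 2)
      = (-(q * Real.log q) - (1-q) * Real.log (1-q)) / Real.log 2 by ring]
  rw [div_lt_iff₀ hl2]
  linarith

theorem phi_le_id (u : ℝ) (hu : u ∈ Set.Icc (0:ℝ) 1) :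
    phi u ≤ u ∧ (phi u = u ↔ u = 0 ∨ u = 1) := by
  obtain ⟨hu0, hu1⟩ := hu
  rcases eq_or_lt_of_le hu0 with h0 | h0
  · have hphi0 : phi 0 = 0 := by norm_num [phi, binEnt]
    rw [← h0]
    simp [hphi0]
  rcases eq_or_lt_of_le hu1 with h1 | h1
  · have hphi1 : phi 1 = 1 := by
      have h2 : phi 1 = binEnt (1/2) := by norm_num [phi]
      have h3 : Real.logb 2 (1/2 : ℝ) = -1 := by
        rw [one_div, Real.logb_inv, Real.logb_self_eq_one (by norm_num)]
      rw [h2, binEnt]; norm_num [h3]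
    rw [h1]
    simp [hphi1]
  · have hs := phi_lt h0 h1
    refine ⟨hs.le, ?_⟩
    constructor
    · intro h; exfalso; linarith
    · rintro (rfl | rfl) <;> linarith
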